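/- Let k₁, k₂, θ₁, θ₂ > 0 and p ≥ 0 be real numbers. Let g_{k,θ}(x) = x^{k−1} e^{−x/θ} / (Γ(k) θ^k) denote the Gamma(k, θ) probability density, let π(x) = ½ g_{k₁,θ₁}(x) + ½ g_{k₂,θ₂}(x), let E[H] = (Γ(k₂) Γ(p + k₁) θ₁^p + Γ(k₁) Γ(p + k₂) θ₂^p) / (2 Γ(k₁) Γ(k₂)), and let φ = (1 + (Γ(k₁) Γ(p + k₂) θ₂^p) / (Γ(k₂) Γ(p + k₁) θ₁^p))^{−1}. Then for every x > 0, the length-biased (anytime) density satisfies x^p π(x) / E[H] = φ · g_{k₁+p, θ₁}(x) + (1 − φ) · g_{k₂+p, θ₂}(x); that is, the anytime distribution of the cold chain is the mixture of Gamma(k₁ + p, θ₁) and Gamma(k₂ + p, θ₂) distributions with mixture weights φ and 1 − φ. -/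

import Mathlib

open MeasureTheory Set

/-- The Gamma(`k`, `θ`) probability density (shape `k`, scale `θ`). -/
noncomputable def gammaPdf (k θ x : ℝ) : ℝ :=
  x ^ (k - 1) * Real.exp (-x / θ) / (Real.Gamma k * θ ^ k)

/-- The anytime (length-biased) density of the cold chain in the Gamma mixture example:
for `x > 0`, `x^p π(x) / E[H] = φ g_{k₁+p,θ₁}(x) + (1-φ) g_{k₂+p,θ₂}(x)`, where
`π = ½ Gamma(k₁,θ₁) + ½ Gamma(k₂,θ₂)`,
`E[H] = (Γ(k₂)Γ(p+k₁)θ₁^p + Γ(k₁)Γ(p+k₂)θ₂^p)/(2Γ(k₁)Γ(k₂))` and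
`φ = (1 + Γ(k₁)Γ(p+k₂)θ₂^p/(Γ(k₂)Γ(p+k₁)θ₁^p))⁻¹`. -/
theorem anytime_gamma_mixture (k₁ k₂ θ₁ θ₂ p : ℝ)
    (hk₁ : 0 < k₁) (hk₂ : 0 < k₂) (hθ₁ : 0 < θ₁) (hθ₂ : 0 < θ₂) (hp : 0 ≤ p)
    (EH φ : ℝ)
    (hEH : EH = (Real.Gamma k₂ * Real.Gamma (p + k₁) * θ₁ ^ p
        + Real.Gamma k₁ * Real.Gamma (p + k₂) * θ₂ ^ p)
        / (2 * Real.Gamma k₁ * Real.Gamma k₂))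
    (hφ : φ = (1 + (Real.Gamma k₁ * Real.Gamma (p + k₂) * θ₂ ^ p)
        / (Real.Gamma k₂ * Real.Gamma (p + k₁) * θ₁ ^ p))⁻¹) :
    ∀ x : ℝ, 0 < x →
      x ^ p * ((1 / 2) * gammaPdf k₁ θ₁ x + (1 / 2) * gammaPdf k₂ θ₂ x) / EH
        = φ * gammaPdf (k₁ + p) θ₁ x + (1 - φ) * gammaPdf (k₂ + p) θ₂ x := by
  intro x hx
  have hG1 : 0 < Real.Gamma k₁ := Real.Gamma_pos_of_pos hk₁
  have hG2 : 0 < Real.Gamma k₂ := Real.Gamma_pos_of_pos hk₂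
  have hG1p : 0 < Real.Gamma (p + k₁) := Real.Gamma_pos_of_pos (by linarith)
  have hG2p : 0 < Real.Gamma (p + k₂) := Real.Gamma_pos_of_pos (by linarith)
  have ht1p : (0:ℝ) < θ₁ ^ p := Real.rpow_pos_of_pos hθ₁ p
  have ht2p : (0:ℝ) < θ₂ ^ p := Real.rpow_pos_of_pos hθ₂ p
  have ht1k : (0:ℝ) < θ₁ ^ k₁ := Real.rpow_pos_of_pos hθ₁ k₁
  have ht2k : (0:ℝ) < θ₂ ^ k₂ := Real.rpow_pos_of_pos hθ₂ k₂
  set A := Real.Gamma k₂ * Real.Gamma (p + k₁) * θ₁ ^ p with hA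
  set B := Real.Gamma k₁ * Real.Gamma (p + k₂) * θ₂ ^ p with hB
  have hApos : 0 < A := by positivity
  have hBpos : 0 < B := by positivity
  have hAB : 0 < A + B := by linarith
  have hφ' : φ = A / (A + B) := by
    rw [hφ]
    field_simp
  have hEHne : EH ≠ 0 := by
    rw [hEH]; positivity
  unfold gammaPdf
  -- rewrite the rpow exponents
  have e1 : x ^ (k₁ + p - 1) = x ^ p * x ^ (k₁ - 1) := by
    rw [← Real.rpow_add hx]; ring_nf
  have e2 : x ^ (k₂ + p - 1) = x ^ p * x ^ (k₂ - 1) := by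
    rw [← Real.rpow_add hx]; ring_nf
  have e3 : θ₁ ^ (k₁ + p) = θ₁ ^ k₁ * θ₁ ^ p := Real.rpow_add hθ₁ k₁ p
  have e4 : θ₂ ^ (k₂ + p) = θ₂ ^ k₂ * θ₂ ^ p := Real.rpow_add hθ₂ k₂ p
  have e5 : Real.Gamma (k₁ + p) = Real.Gamma (p + k₁) := by rw [add_comm]
  have e6 : Real.Gamma (k₂ + p) = Real.Gamma (p + k₂) := by rw [add_comm]
  rw [e1, e2, e3, e4, e5, e6, hφ', hEH]
  have h1 : (1:ℝ) - A / (A + B) = B / (A + B) := by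
    field_simp
    ring
  rw [h1, hA, hB]
  field_simp
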